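/- Let n be even, fix plant matrices A, B, C ∈ ℝ^{n×n}, B_w, D_w ∈ ℝ^{n×n_w}, C_z, D_z ∈ ℝ^{n_z×n}, and γ > 0. Suppose A_K, B_K1, B_K2, B_K3, C_K ∈ ℝ^{n×n} satisfy the standard LQG conditions with bound γ (there exists a symmetric positive definite P with 𝒜P + P𝒜ᵀ + ℬℬᵀ = 0 and tr(𝒞P𝒞ᵀ) < γ). Then for a fixed real skew-symmetric matrix Θ_K, there exists an invertible S ∈ ℝ^{n×n} such that the transformed matrices S A_K S⁻¹, S B_Ki (i = 1,2,3), C_K S⁻¹ satisfy the physical realizability constraints with Θ_K if and only if there exists a real skew-symmetric matrix Z satisfying A_K Z + Z A_Kᵀ + Σ_{i=1}^{3} B_Ki·diag_{n/2}(J)·B_Kiᵀ = 0 and B_K1 = Z C_Kᵀ diag_{n/2}(J), together with an invertible real matrix S such that S Z Sᵀ = Θ_K. -/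

import Mathlib

noncomputable section
open Matrix

/-- The `n × n` block-diagonal matrix `diag(J, …, J)` with `n/2` copies of
`J = [[0,1],[-1,0]]` on the diagonal (for even `n`). -/
def Jblock (n : ℕ) : Matrix (Fin n) (Fin n) ℝ :=
  Matrix.of fun i j =>
    if i.val + 1 = j.val ∧ i.val % 2 = 0 then (1 : ℝ)
    else if j.val + 1 = i.val ∧ j.val % 2 = 0 then (-1 : ℝ) else 0

/-- Closed-loop `𝒜 = [[A, B C_K],[B_K3 C, A_K]]`. -/
def clA (n : ℕ) (A B C AK BK3 CK : Matrix (Fin n) (Fin n) ℝ) :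
    Matrix (Fin n ⊕ Fin n) (Fin n ⊕ Fin n) ℝ :=
  Matrix.fromBlocks A (B * CK) (BK3 * C) AK

/-- Closed-loop `ℬ = [[B_w, B, 0],[B_K3 D_w, B_K1, B_K2]]`. -/
def clB (n nw : ℕ) (B : Matrix (Fin n) (Fin n) ℝ) (Bw Dw : Matrix (Fin n) (Fin nw) ℝ)
    (BK1 BK2 BK3 : Matrix (Fin n) (Fin n) ℝ) :
    Matrix (Fin n ⊕ Fin n) (Fin nw ⊕ (Fin n ⊕ Fin n)) ℝ :=
  Matrix.fromBlocks Bw (Matrix.fromCols B 0) (BK3 * Dw) (Matrix.fromCols BK1 BK2)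

/-- Closed-loop `𝒞 = [C_z, D_z C_K]`. -/
def clC (n nz : ℕ) (Cz Dz : Matrix (Fin nz) (Fin n) ℝ)
    (CK : Matrix (Fin n) (Fin n) ℝ) : Matrix (Fin nz) (Fin n ⊕ Fin n) ℝ :=
  Matrix.fromCols Cz (Dz * CK)

/-- The physical realizability constraints with commutation matrix `Θ_K`. -/
def PhysReal (n : ℕ) (ΘK AK BK1 BK2 BK3 CK : Matrix (Fin n) (Fin n) ℝ) : Prop :=
  AK * ΘK + ΘK * AKᵀ
      + BK1 * Jblock n * BK1ᵀ + BK2 * Jblock n * BK2ᵀ + BK3 * Jblock n * BK3ᵀ = 0 ∧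
  BK1 = ΘK * CKᵀ * Jblock n

lemma physreal_conj (n : ℕ) (Z AK B1 B2 B3 CK S : Matrix (Fin n) (Fin n) ℝ)
    (hS : IsUnit S.det) :
    PhysReal n (S * Z * Sᵀ) (S * AK * S⁻¹) (S * B1) (S * B2) (S * B3) (CK * S⁻¹) ↔
      PhysReal n Z AK B1 B2 B3 CK := by
  have hST : IsUnit Sᵀ.det := by rwa [Matrix.det_transpose]
  have c1 : ∀ X : Matrix (Fin n) (Fin n) ℝ, S * (S⁻¹ * X) = X := fun X => by
    rw [← Matrix.mul_assoc, Matrix.mul_nonsing_inv S hS, Matrix.one_mul]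
  have c2 : ∀ X : Matrix (Fin n) (Fin n) ℝ, S⁻¹ * (S * X) = X := fun X => by
    rw [← Matrix.mul_assoc, Matrix.nonsing_inv_mul S hS, Matrix.one_mul]
  have c3 : ∀ X : Matrix (Fin n) (Fin n) ℝ, Sᵀ * (S⁻¹ᵀ * X) = X := fun X => by
    rw [← Matrix.mul_assoc, ← Matrix.transpose_mul, Matrix.nonsing_inv_mul S hS,
      Matrix.transpose_one, Matrix.one_mul]
  have c4 : ∀ X : Matrix (Fin n) (Fin n) ℝ, S⁻¹ᵀ * (Sᵀ * X) = X := fun X => by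
    rw [← Matrix.mul_assoc, ← Matrix.transpose_mul, Matrix.mul_nonsing_inv S hS,
      Matrix.transpose_one, Matrix.one_mul]
  have key : ∀ X : Matrix (Fin n) (Fin n) ℝ, S * X * Sᵀ = 0 ↔ X = 0 := by
    intro X
    constructor
    · intro h
      have hst : Sᵀ * S⁻¹ᵀ = 1 := by
        rw [← Matrix.transpose_mul, Matrix.nonsing_inv_mul S hS, Matrix.transpose_one]
      have h2 : S⁻¹ * (S * X * Sᵀ * S⁻¹ᵀ) = 0 := by rw [h]; simp
      rwa [Matrix.mul_assoc _ Sᵀ _, hst, Matrix.mul_one, c2] at h2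
    · intro h; rw [h]; simp
  have keyL : ∀ X Y : Matrix (Fin n) (Fin n) ℝ, S * X = S * Y ↔ X = Y := by
    intro X Y
    constructor
    · intro h
      have := congrArg (fun M => S⁻¹ * M) h
      simpa [c2] using this
    · intro h; rw [h]
  have eqn1 : S * AK * S⁻¹ * (S * Z * Sᵀ) + S * Z * Sᵀ * (S * AK * S⁻¹)ᵀ
      + S * B1 * Jblock n * (S * B1)ᵀ + S * B2 * Jblock n * (S * B2)ᵀ
      + S * B3 * Jblock n * (S * B3)ᵀ
      = S * (AK * Z + Z * AKᵀ + B1 * Jblock n * B1ᵀ + B2 * Jblock n * B2ᵀ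
          + B3 * Jblock n * B3ᵀ) * Sᵀ := by
    simp only [Matrix.transpose_mul, Matrix.mul_add, Matrix.add_mul, Matrix.mul_assoc,
      c1, c2, c3, c4]
  have eqn2 : S * Z * Sᵀ * (CK * S⁻¹)ᵀ * Jblock n = S * (Z * CKᵀ * Jblock n) := by
    simp only [Matrix.transpose_mul, Matrix.mul_assoc, c3]
  unfold PhysReal
  rw [eqn1, eqn2, key, keyL]

/-- under the standard LQG conditions, existence of an invertible `S`
making the transformed controller physically realizable with commutation matrix
`Θ_K` is equivalent to existence of a skew-symmetric `Z` satisfying the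
realizability equations for the original matrices together with an invertible `S`
with `S Z Sᵀ = Θ_K`. -/
theorem realizability_transform_iff
    (n nw nz : ℕ) (hne : Even n)
    (A B C : Matrix (Fin n) (Fin n) ℝ)
    (Bw Dw : Matrix (Fin n) (Fin nw) ℝ)
    (Cz Dz : Matrix (Fin nz) (Fin n) ℝ)
    (γ : ℝ) (hγ : 0 < γ)
    (AK BK1 BK2 BK3 CK : Matrix (Fin n) (Fin n) ℝ)
    (hlqg : ∃ P : Matrix (Fin n ⊕ Fin n) (Fin n ⊕ Fin n) ℝ, P.PosDef ∧
      clA n A B C AK BK3 CK * P + P * (clA n A B C AK BK3 CK)ᵀ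
        + clB n nw B Bw Dw BK1 BK2 BK3 * (clB n nw B Bw Dw BK1 BK2 BK3)ᵀ = 0 ∧
      (clC n nz Cz Dz CK * P * (clC n nz Cz Dz CK)ᵀ).trace < γ)
    (ΘK : Matrix (Fin n) (Fin n) ℝ) (hskewΘ : ΘKᵀ = -ΘK) :
    (∃ S : Matrix (Fin n) (Fin n) ℝ, IsUnit S.det ∧
      PhysReal n ΘK (S * AK * S⁻¹) (S * BK1) (S * BK2) (S * BK3) (CK * S⁻¹)) ↔
    (∃ Z : Matrix (Fin n) (Fin n) ℝ, Zᵀ = -Z ∧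
      PhysReal n Z AK BK1 BK2 BK3 CK ∧
      ∃ S : Matrix (Fin n) (Fin n) ℝ, IsUnit S.det ∧ S * Z * Sᵀ = ΘK) := by
  constructor
  · rintro ⟨S, hS, hPR⟩
    have hST : IsUnit Sᵀ.det := by rwa [Matrix.det_transpose]
    have hts : S⁻¹ᵀ * Sᵀ = 1 := by
      rw [← Matrix.transpose_mul, Matrix.mul_nonsing_inv S hS, Matrix.transpose_one]
    have hback : S * (S⁻¹ * ΘK * S⁻¹ᵀ) * Sᵀ = ΘK := by
      rw [Matrix.mul_assoc S⁻¹ ΘK S⁻¹ᵀ, ← Matrix.mul_assoc S S⁻¹ _,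
        Matrix.mul_nonsing_inv S hS, Matrix.one_mul, Matrix.mul_assoc ΘK S⁻¹ᵀ Sᵀ,
        hts, Matrix.mul_one]
    refine ⟨S⁻¹ * ΘK * S⁻¹ᵀ, ?_, ?_, S, hS, hback⟩
    · rw [Matrix.transpose_mul, Matrix.transpose_mul, Matrix.transpose_transpose, hskewΘ]
      simp [Matrix.mul_assoc]
    · exact (physreal_conj n _ AK BK1 BK2 BK3 CK S hS).mp (by rwa [hback])
  · rintro ⟨Z, hZ, hPR, S, hS, hSZ⟩
    exact ⟨S, hS, by rw [← hSZ]; exact (physreal_conj n Z AK BK1 BK2 BK3 CK S hS).mpr hPR⟩
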